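/- Let G be a connected graph with no induced P_5 and no induced C_4, containing an induced 5-cycle C. Then every vertex of G not on C that has a neighbor on C is adjacent either to all five vertices of C or to exactly three consecutive vertices of C. -/

import Mathlib

open SimpleGraph

lemma aux_C4 {V : Type*} (G : SimpleGraph V) (w x y z : V)
    (hwy : w ≠ y) (hxz : x ≠ z)
    (e1 : G.Adj w x) (e2 : G.Adj x y) (e3 : G.Adj y z) (e4 : G.Adj z w)
    (n1 : ¬ G.Adj w y) (n2 : ¬ G.Adj x z) :
    Nonempty (cycleGraph 4 ↪g G) := by
  have n1' : ¬ G.Adj y w := fun h => n1 h.symm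
  have n2' : ¬ G.Adj z x := fun h => n2 h.symm
  refine ⟨⟨⟨![w, x, y, z], ?_⟩, ?_⟩⟩
  · intro a b
    fin_cases a <;> fin_cases b <;>
      simp_all [e1.ne, e2.ne, e3.ne, e4.ne, e1.ne', e2.ne', e3.ne', e4.ne', hwy.symm, hxz.symm]
  · intro a b
    change G.Adj (![w, x, y, z] a) (![w, x, y, z] b) ↔ _
    fin_cases a <;> fin_cases b <;>
      simp_all [cycleGraph_adj (n := 2), e1.symm, e2.symm, e3.symm, e4.symm] <;> decide

lemma aux_P5 {V : Type*} (G : SimpleGraph V) (a b c d e : V)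
    (hac : a ≠ c) (had : a ≠ d) (hae : a ≠ e) (hbd : b ≠ d) (hbe : b ≠ e) (hce : c ≠ e)
    (e1 : G.Adj a b) (e2 : G.Adj b c) (e3 : G.Adj c d) (e4 : G.Adj d e)
    (n1 : ¬ G.Adj a c) (n2 : ¬ G.Adj a d) (n3 : ¬ G.Adj a e)
    (n4 : ¬ G.Adj b d) (n5 : ¬ G.Adj b e) (n6 : ¬ G.Adj c e) :
    Nonempty (pathGraph 5 ↪g G) := by
  have n1' : ¬ G.Adj c a := fun h => n1 h.symm
  have n2' : ¬ G.Adj d a := fun h => n2 h.symm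
  have n3' : ¬ G.Adj e a := fun h => n3 h.symm
  have n4' : ¬ G.Adj d b := fun h => n4 h.symm
  have n5' : ¬ G.Adj e b := fun h => n5 h.symm
  have n6' : ¬ G.Adj e c := fun h => n6 h.symm
  refine ⟨⟨⟨![a, b, c, d, e], ?_⟩, ?_⟩⟩
  · intro i j
    fin_cases i <;> fin_cases j <;>
      simp_all [e1.ne, e2.ne, e3.ne, e4.ne, e1.ne', e2.ne', e3.ne', e4.ne',
        hac.symm, had.symm, hae.symm, hbd.symm, hbe.symm, hce.symm]
  · intro i j
    change G.Adj (![a, b, c, d, e] i) (![a, b, c, d, e] j) ↔ _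
    fin_cases i <;> fin_cases j <;>
      simp_all [pathGraph_adj, e1.symm, e2.symm, e3.symm, e4.symm] <;> decide

/-- In a connected `{P_5, C_4}`-free graph with an induced 5-cycle `C`, every
vertex off `C` with a neighbor on `C` is adjacent to all of `C` or to exactly
three consecutive vertices of `C`. -/
theorem P5_C4_free_C5_neighbors {V : Type*} (G : SimpleGraph V) (hconn : G.Connected)
    (hP5 : ¬ Nonempty (pathGraph 5 ↪g G))
    (hC4 : ¬ Nonempty (cycleGraph 4 ↪g G))
    (f : cycleGraph 5 ↪g G) :
    ∀ v : V, v ∉ Set.range f → (∃ u ∈ Set.range f, G.Adj v u) →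
      (∀ u ∈ Set.range f, G.Adj v u) ∨
        ∃ i : Fin 5, {u | u ∈ Set.range f ∧ G.Adj v u} = {f i, f (i + 1), f (i + 2)} := by
  intro v hv hex
  classical
  have hne : ∀ x : Fin 5, v ≠ f x := fun x h => hv ⟨x, h.symm⟩
  have hfeq : ∀ x a b : Fin 5, f (x + a) = f (x + b) ↔ a = b := fun x a b =>
    (f.injective.eq_iff).trans (add_right_inj x)
  have hfne : ∀ x a b : Fin 5, a ≠ b → f (x + a) ≠ f (x + b) := fun x a b h hh =>
    h ((hfeq x a b).mp hh)
  have hA : ∀ x a b : Fin 5, G.Adj (f (x+a)) (f (x+b)) ↔ ((b - a : Fin 5) = 1 ∨ a - b = 1) := by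
    intro x a b
    rw [f.map_rel_iff, cycleGraph_adj (n := 3), add_sub_add_left_eq_sub, add_sub_add_left_eq_sub]
    tauto
  have hAD : ∀ x a b : Fin 5, ((b - a : Fin 5) = 1 ∨ a - b = 1) → G.Adj (f (x+a)) (f (x+b)) :=
    fun x a b h => (hA x a b).mpr h
  have hNA : ∀ x a b : Fin 5, ¬((b - a : Fin 5) = 1 ∨ a - b = 1) → ¬ G.Adj (f (x+a)) (f (x+b)) :=
    fun x a b h hh => h ((hA x a b).mp hh)
  -- gap lemma: the pattern  adj, nonadj, adj  on three consecutive cycle vertices gives a C4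
  have gap : ∀ x : Fin 5, G.Adj v (f (x+0)) → ¬G.Adj v (f (x+1)) → G.Adj v (f (x+2)) → False := by
    intro x a0 a1 a2
    exact hC4 (aux_C4 G v (f (x+0)) (f (x+1)) (f (x+2)) (hne _) (hfne x 0 2 (by decide))
      a0 (hAD x 0 1 (by decide)) (hAD x 1 2 (by decide)) a2.symm a1
      (hNA x 0 2 (by decide)))
  -- P5 lemma: adjacent at x, nonadjacent at the next three, gives an induced P5
  have p5 : ∀ x : Fin 5, G.Adj v (f (x+0)) → ¬G.Adj v (f (x+1)) → ¬G.Adj v (f (x+2)) →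
      ¬G.Adj v (f (x+3)) → False := by
    intro x a0 a1 a2 a3
    exact hP5 (aux_P5 G v (f (x+0)) (f (x+1)) (f (x+2)) (f (x+3))
      (hne _) (hne _) (hne _) (hfne x 0 2 (by decide)) (hfne x 0 3 (by decide))
      (hfne x 1 3 (by decide))
      a0 (hAD x 0 1 (by decide)) (hAD x 1 2 (by decide)) (hAD x 2 3 (by decide))
      a1 a2 a3 (hNA x 0 2 (by decide)) (hNA x 0 3 (by decide)) (hNA x 1 3 (by decide)))
  by_cases hall : ∀ u ∈ Set.range f, G.Adj v u
  · exact Or.inl hall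
  push_neg at hall
  obtain ⟨u, ⟨k, rfl⟩, hk⟩ := hall
  obtain ⟨_, ⟨j, rfl⟩, hj⟩ := hex
  -- find a transition: adjacent at i, nonadjacent at i+1
  have hd : ∀ c : Fin 5, c = 0 ∨ c = 1 ∨ c = 2 ∨ c = 3 ∨ c = 4 := by decide
  have htrans : ∃ i : Fin 5, G.Adj v (f i) ∧ ¬ G.Adj v (f (i+1)) := by
    by_contra h
    push_neg at h
    have h0 : G.Adj v (f (j+0)) := by simpa using hj
    have h1 : G.Adj v (f (j+1)) := by
      have := h _ h0; rwa [show j+0+1 = j+1 by open Fin.CommRing in ring] at this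
    have h2 : G.Adj v (f (j+2)) := by
      have := h _ h1; rwa [show j+1+1 = j+2 by open Fin.CommRing in ring] at this
    have h3 : G.Adj v (f (j+3)) := by
      have := h _ h2; rwa [show j+2+1 = j+3 by open Fin.CommRing in ring] at this
    have h4 : G.Adj v (f (j+4)) := by
      have := h _ h3; rwa [show j+3+1 = j+4 by open Fin.CommRing in ring] at this
    have hc : ∀ c : Fin 5, G.Adj v (f (j + c)) := by
      intro c
      rcases hd c with rfl|rfl|rfl|rfl|rfl
      exacts [h0, h1, h2, h3, h4]
    have := hc (k - j)
    rw [show j + (k - j) = k by open Fin.CommRing in ring] at this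
    exact hk this
  obtain ⟨i, hPi, hPi1⟩ := htrans
  have hP0 : G.Adj v (f (i+0)) := by simpa using hPi
  have hP2 : ¬ G.Adj v (f (i+2)) := fun h => gap i hP0 hPi1 h
  have hP3 : G.Adj v (f (i+3)) := by
    by_contra h
    exact p5 i hP0 hPi1 hP2 h
  have h52 : i+3+2 = i+0 := by
    rw [add_assoc]; exact congrArg (i + ·) (by decide)
  have hP4 : G.Adj v (f (i+4)) := by
    by_contra h
    refine gap (i+3) (by rwa [show i+3+0 = i+3 by open Fin.CommRing in ring]) (by rwa [show i+3+1 = i+4 by open Fin.CommRing in ring]) ?_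
    rwa [h52]
  refine Or.inr ⟨i+3, ?_⟩
  ext u
  simp only [Set.mem_setOf_eq, Set.mem_insert_iff, Set.mem_singleton_iff]
  constructor
  · rintro ⟨⟨t, rfl⟩, ht⟩
    obtain ⟨c, rfl⟩ : ∃ c, t = i + c := ⟨t - i, by open Fin.CommRing in ring⟩
    rcases hd c with rfl|rfl|rfl|rfl|rfl
    · right; right
      exact congrArg f h52.symm
    · exact absurd ht hPi1
    · exact absurd ht hP2
    · left; rfl
    · right; left
      exact congrArg f (by open Fin.CommRing in ring : i + (4:Fin 5) = i + 3 + 1)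
  · rintro (rfl | rfl | rfl)
    · exact ⟨⟨_, rfl⟩, hP3⟩
    · refine ⟨⟨_, rfl⟩, ?_⟩
      rwa [show i+3+1 = i+4 by open Fin.CommRing in ring]
    · refine ⟨⟨_, rfl⟩, ?_⟩
      rwa [h52]
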